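/- Let the functions φ_j be defined recursively by φ_0(z) = e^z, φ_{j+1}(z) = (φ_j(z) − 1/j!)/z for z ≠ 0, and φ_j(0) = 1/j!. For every a ∈ ℝ, h > 0 and y, γ₁, γ₂, γ₃, γ₄ ∈ ℝ, setting w₁ = a y + γ₁ and w_j = γ_j + a h w_{j−1} for j = 2, 3, 4, one has e^{a h} y + h Σ_{j=1}^{4} φ_j(a h) γ_j = y + h ( w₁ + w₂/2 + w₃/6 + φ_4(a h) w₄ ). -/

import Mathlib

/-- The exponential propagation functions φ_j: φ_0(z) = e^z,
φ_{j+1}(z) = (φ_j(z) - 1/j!)/z for z ≠ 0, and φ_j(0) = 1/j!. -/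
noncomputable def phi : ℕ → ℝ → ℝ
  | 0, z => Real.exp z
  | j + 1, z =>
      if z = 0 then 1 / (Nat.factorial (j + 1)) else (phi j z - 1 / (Nat.factorial j)) / z


/-- Horner-type reformulation of one EAB₄ step. -/
theorem eab4_horner (a h : ℝ) (hh : 0 < h) (y γ₁ γ₂ γ₃ γ₄ : ℝ)
    (w₁ w₂ w₃ w₄ : ℝ)
    (hw₁ : w₁ = a * y + γ₁) (hw₂ : w₂ = γ₂ + a * h * w₁)
    (hw₃ : w₃ = γ₃ + a * h * w₂) (hw₄ : w₄ = γ₄ + a * h * w₃) :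
    Real.exp (a * h) * y
        + h * (phi 1 (a * h) * γ₁ + phi 2 (a * h) * γ₂
             + phi 3 (a * h) * γ₃ + phi 4 (a * h) * γ₄)
      = y + h * (w₁ + w₂ / 2 + w₃ / 6 + phi 4 (a * h) * w₄) := by
  subst hw₁ hw₂ hw₃ hw₄
  set z := a * h with hz
  by_cases h0 : z = 0
  · have ha : a = 0 := by
      rcases mul_eq_zero.mp h0 with h' | h'
      · exact h'
      · exact absurd h' (ne_of_gt hh)
    simp [phi, h0, ha, Nat.factorial]
    exact Or.inl (by ring)
  · have e0 : phi 0 z = Real.exp z := rfl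
    have e1 : phi 1 z = (Real.exp z - 1) / z := by
      simp [phi, h0, Nat.factorial]
    have e2 : phi 2 z = (phi 1 z - 1) / z := by
      simp [phi, h0, Nat.factorial]
    have e3 : phi 3 z = (phi 2 z - 1 / 2) / z := by
      show (if z = 0 then _ else (phi 2 z - 1 / (Nat.factorial 2 : ℝ)) / z) = _
      simp [h0, Nat.factorial]
    have e4 : phi 4 z = (phi 3 z - 1 / 6) / z := by
      show (if z = 0 then _ else (phi 3 z - 1 / (Nat.factorial 3 : ℝ)) / z) = _
      simp [h0, Nat.factorial]
    rw [e4, e3, e2, e1]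
    have hA : a = z / h := by field_simp [hz]; exact hz.symm
    rw [hA]
    field_simp
    ring
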